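/- Let n ≥ 2 and l_1,...,l_n be positive integers with l = l_1 + ... + l_n ≥ 5. With a_k as in the previous context, Σ_{k=1}^l 2^k · a_k < ((e^4 - 1)/2) · 2^(binom(l,2)) · binom(l; l_1,...,l_n). -/

import Mathlib

open Finset

namespace Stmt9

lemma descFactorial_add_split (n a b : ℕ) :
    n.descFactorial (a + b) = n.descFactorial a * (n - a).descFactorial b := by
  induction b with
  | zero => simp
  | succ b ih =>
    rw [← Nat.add_assoc, Nat.descFactorial_succ, ih, Nat.descFactorial_succ, Nat.sub_sub]
    ring

lemma pair_le {a b c t : ℕ} (hc : c ≤ a) :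
    (a + 2).descFactorial c * (b + 2).descFactorial t ≤ (a + b + 2).descFactorial (c + t) := by
  rw [descFactorial_add_split]
  exact Nat.mul_le_mul (Nat.descFactorial_le c (by omega)) (Nat.descFactorial_le t (by omega))

lemma prod_descFactorial_le {n : ℕ} (L d : Fin n → ℕ) (h : ∀ i, d i ≤ L i) :
    ∏ i, (L i + 2).descFactorial (d i)
      ≤ ((∑ i, L i) + 2).descFactorial (∑ i, d i) := by
  classical
  have H : ∀ s : Finset (Fin n), ∏ i ∈ s, (L i + 2).descFactorial (d i)
      ≤ ((∑ i ∈ s, L i) + 2).descFactorial (∑ i ∈ s, d i) := by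
    intro s
    induction s using Finset.cons_induction with
    | empty => simp
    | cons i s hi ih =>
      rw [prod_cons, sum_cons, sum_cons]
      calc (L i + 2).descFactorial (d i) * ∏ j ∈ s, (L j + 2).descFactorial (d j)
          ≤ (L i + 2).descFactorial (d i) * ((∑ j ∈ s, L j) + 2).descFactorial (∑ j ∈ s, d j) :=
            Nat.mul_le_mul le_rfl ih
        _ ≤ (L i + (∑ j ∈ s, L j) + 2).descFactorial (d i + ∑ j ∈ s, d j) := pair_le (h i)
  exact H univ

lemma sum_prod_choose {ι : Type*} [DecidableEq ι] (s : Finset ι) (L : ι → ℕ) (k : ℕ) :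
    ∑ d ∈ s.piAntidiag k, ∏ i ∈ s, (L i).choose (d i) = (∑ i ∈ s, L i).choose k := by
  induction s using Finset.cons_induction generalizing k with
  | empty =>
    rcases Nat.eq_zero_or_pos k with rfl | hk
    · simp
    · rw [piAntidiag_empty_of_ne_zero hk.ne']
      simp [Nat.choose_eq_zero_of_lt hk]
  | cons i s hi ih =>
    rw [piAntidiag_cons hi, sum_disjiUnion, sum_cons, Nat.add_choose_eq]
    refine Finset.sum_congr rfl fun p hp => ?_
    rw [sum_map, mul_comm ((L i).choose p.1), ← ih p.2, sum_mul]
    refine Finset.sum_congr rfl fun g hg => ?_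
    have hgi : g i = 0 := by
      by_contra hne
      exact hi ((mem_piAntidiag.mp hg).2 i hne)
    have h1 : (addRightEmbedding fun t => if t = i then p.1 else 0) g i = p.1 := by
      simp [addRightEmbedding_apply, hgi]
    have h2 : ∀ j ∈ s, (addRightEmbedding fun t => if t = i then p.1 else 0) g j = g j := by
      intro j hj
      have hji : j ≠ i := fun h => hi (h ▸ hj)
      simp [addRightEmbedding_apply, hji]
    rw [prod_cons, h1, Finset.prod_congr rfl (fun j hj => by rw [h2 j hj]), mul_comm]

lemma term_bound {n : ℕ} (L j d : Fin n → ℕ) (l k : ℕ) (hsum : ∑ i, L i = l)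
    (hjd : ∀ i, j i + d i = L i) (hjsum : ∑ i, j i = l - k) (hdsum : ∑ i, d i = k) :
    l.factorial * (Nat.multinomial Finset.univ j * ∏ i, (L i + 2).choose (j i + 2))
      ≤ (l - k).factorial * (l + 2).descFactorial k * (∏ i, (L i).choose (d i)) *
        Nat.multinomial Finset.univ L := by
  refine Nat.le_of_mul_le_mul_right ?_
    (show 0 < (∏ i, (j i).factorial) * (∏ i, (d i).factorial) by positivity)
  have e1 : Nat.multinomial Finset.univ j * ∏ i, (j i).factorial = (l - k).factorial := by
    rw [mul_comm, Nat.multinomial_spec, hjsum]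
  have e2 : ∀ i, (L i + 2).choose (j i + 2) * (d i).factorial = (L i + 2).descFactorial (d i) := by
    intro i
    have h1 : j i + 2 ≤ L i + 2 := by have := hjd i; omega
    have h2 : L i + 2 - (j i + 2) = d i := by have := hjd i; omega
    rw [← Nat.choose_symm h1, h2, Nat.descFactorial_eq_factorial_mul_choose, mul_comm]
  have e3 : ∀ i, (L i).choose (d i) * ((j i).factorial * (d i).factorial) = (L i).factorial := by
    intro i
    have hdle : d i ≤ L i := by have := hjd i; omega
    have hji : j i = L i - d i := by have := hjd i; omega
    calc (L i).choose (d i) * ((j i).factorial * (d i).factorial)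
        = (L i).choose (d i) * (d i).factorial * (L i - d i).factorial := by rw [hji]; ring
      _ = (L i).factorial := Nat.choose_mul_factorial_mul_factorial hdle
  have e4 : Nat.multinomial Finset.univ L * ∏ i, (L i).factorial = l.factorial := by
    rw [mul_comm, Nat.multinomial_spec, hsum]
  have lhs_eq : l.factorial * (Nat.multinomial Finset.univ j * ∏ i, (L i + 2).choose (j i + 2)) *
      ((∏ i, (j i).factorial) * (∏ i, (d i).factorial))
      = l.factorial * (l - k).factorial * ∏ i, (L i + 2).descFactorial (d i) := by
    calc l.factorial * (Nat.multinomial Finset.univ j * ∏ i, (L i + 2).choose (j i + 2)) *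
          ((∏ i, (j i).factorial) * (∏ i, (d i).factorial))
        = l.factorial * (Nat.multinomial Finset.univ j * ∏ i, (j i).factorial) *
          ((∏ i, (L i + 2).choose (j i + 2)) * (∏ i, (d i).factorial)) := by ring
      _ = l.factorial * (l - k).factorial *
          ∏ i, ((L i + 2).choose (j i + 2) * (d i).factorial) := by
          rw [e1, ← Finset.prod_mul_distrib]
      _ = l.factorial * (l - k).factorial * ∏ i, (L i + 2).descFactorial (d i) := by
          rw [Finset.prod_congr rfl fun i _ => e2 i]
  have rhs_eq : (l - k).factorial * (l + 2).descFactorial k * (∏ i, (L i).choose (d i)) *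
      Nat.multinomial Finset.univ L * ((∏ i, (j i).factorial) * (∏ i, (d i).factorial))
      = (l - k).factorial * (l + 2).descFactorial k * l.factorial := by
    calc (l - k).factorial * (l + 2).descFactorial k * (∏ i, (L i).choose (d i)) *
          Nat.multinomial Finset.univ L * ((∏ i, (j i).factorial) * (∏ i, (d i).factorial))
        = (l - k).factorial * (l + 2).descFactorial k * (Nat.multinomial Finset.univ L *
          ((∏ i, (L i).choose (d i)) * ((∏ i, (j i).factorial) * (∏ i, (d i).factorial)))) := by
          ring
      _ = (l - k).factorial * (l + 2).descFactorial k * (Nat.multinomial Finset.univ L *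
          ∏ i, ((L i).choose (d i) * ((j i).factorial * (d i).factorial))) := by
          rw [Finset.prod_mul_distrib, Finset.prod_mul_distrib]
      _ = (l - k).factorial * (l + 2).descFactorial k * (Nat.multinomial Finset.univ L *
          ∏ i, (L i).factorial) := by
          rw [Finset.prod_congr rfl fun i _ => e3 i]
      _ = (l - k).factorial * (l + 2).descFactorial k * l.factorial := by rw [e4]
  rw [lhs_eq, rhs_eq]
  have hprod : ∏ i, (L i + 2).descFactorial (d i) ≤ (l + 2).descFactorial k := by
    have := prod_descFactorial_le L d (fun i => by have := hjd i; omega)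
    rwa [hsum, hdsum] at this
  calc l.factorial * (l - k).factorial * ∏ i, (L i + 2).descFactorial (d i)
      ≤ l.factorial * (l - k).factorial * (l + 2).descFactorial k := Nat.mul_le_mul_left _ hprod
    _ = (l - k).factorial * (l + 2).descFactorial k * l.factorial := by ring

lemma main_bound {n : ℕ} (L : Fin n → ℕ) (l k : ℕ) (hsum : ∑ i, L i = l) (hk : k ≤ l) :
    ∑ j ∈ (Finset.Nat.antidiagonalTuple n (l - k)).filter (fun j => ∀ i, j i ≤ L i),
      Nat.multinomial Finset.univ j * ∏ i, (L i + 2).choose (j i + 2)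
    ≤ (l + 2).choose k * Nat.multinomial Finset.univ L := by
  classical
  set F := (Finset.Nat.antidiagonalTuple n (l - k)).filter (fun j => ∀ i, j i ≤ L i) with hF
  have hsums : ∀ j ∈ F, (∑ i, j i = l - k) ∧ (∑ i, (L i - j i) = k) ∧ ∀ i, j i ≤ L i := by
    intro j hj
    obtain ⟨hjmem, hjle⟩ := Finset.mem_filter.mp hj
    have hjsum : ∑ i, j i = l - k := Finset.Nat.mem_antidiagonalTuple.mp hjmem
    refine ⟨hjsum, ?_, hjle⟩
    have h1 : ∑ i, (j i + (L i - j i)) = ∑ i, L i :=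
      Finset.sum_congr rfl fun i _ => by have := hjle i; omega
    rw [Finset.sum_add_distrib, hjsum, hsum] at h1
    omega
  have claim : ∀ j ∈ F,
      l.factorial * (Nat.multinomial Finset.univ j * ∏ i, (L i + 2).choose (j i + 2))
      ≤ (l - k).factorial * (l + 2).descFactorial k * (∏ i, (L i).choose (L i - j i)) *
        Nat.multinomial Finset.univ L := by
    intro j hj
    obtain ⟨h1, h2, h3⟩ := hsums j hj
    exact term_bound L j (fun i => L i - j i) l k hsum
      (fun i => by show j i + (L i - j i) = L i; have := h3 i; omega) h1 h2
  have himage : ∑ j ∈ F, ∏ i, (L i).choose (L i - j i) ≤ l.choose k := by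
    have hinj : ∀ x ∈ F, ∀ y ∈ F, (fun i => L i - x i) = (fun i => L i - y i) → x = y := by
      intro x hx y hy hxy
      obtain ⟨-, -, hxle⟩ := hsums x hx
      obtain ⟨-, -, hyle⟩ := hsums y hy
      funext i
      have h1 := congrFun hxy i
      have := hxle i
      have := hyle i
      omega
    have himg : F.image (fun j => fun i => L i - j i) ⊆ Finset.Nat.antidiagonalTuple n k := by
      intro d hdmem
      obtain ⟨j, hj, rfl⟩ := Finset.mem_image.mp hdmem
      obtain ⟨-, h2, -⟩ := hsums j hj
      exact Finset.Nat.mem_antidiagonalTuple.mpr h2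
    calc ∑ j ∈ F, ∏ i, (L i).choose (L i - j i)
        = ∑ d ∈ F.image (fun j => fun i => L i - j i), ∏ i, (L i).choose (d i) := by
          rw [Finset.sum_image hinj]
      _ ≤ ∑ d ∈ Finset.Nat.antidiagonalTuple n k, ∏ i, (L i).choose (d i) :=
          Finset.sum_le_sum_of_subset himg
      _ = l.choose k := by
          rw [← Finset.piAntidiag_univ_fin_eq_antidiagonalTuple k n, sum_prod_choose, hsum]
  have final : l.factorial *
      (∑ j ∈ F, Nat.multinomial Finset.univ j * ∏ i, (L i + 2).choose (j i + 2))
      ≤ l.factorial * ((l + 2).choose k * Nat.multinomial Finset.univ L) := by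
    calc l.factorial * (∑ j ∈ F, Nat.multinomial Finset.univ j * ∏ i, (L i + 2).choose (j i + 2))
        = ∑ j ∈ F, l.factorial *
            (Nat.multinomial Finset.univ j * ∏ i, (L i + 2).choose (j i + 2)) := by
          rw [Finset.mul_sum]
      _ ≤ ∑ j ∈ F, (l - k).factorial * (l + 2).descFactorial k *
            (∏ i, (L i).choose (L i - j i)) * Nat.multinomial Finset.univ L :=
          Finset.sum_le_sum claim
      _ = (l - k).factorial * (l + 2).descFactorial k * Nat.multinomial Finset.univ L *
            (∑ j ∈ F, ∏ i, (L i).choose (L i - j i)) := by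
          rw [Finset.mul_sum]
          exact Finset.sum_congr rfl fun j _ => by ring
      _ ≤ (l - k).factorial * (l + 2).descFactorial k * Nat.multinomial Finset.univ L *
            l.choose k := Nat.mul_le_mul_left _ himage
      _ = l.factorial * ((l + 2).choose k * Nat.multinomial Finset.univ L) := by
          rw [Nat.descFactorial_eq_factorial_mul_choose,
            ← Nat.choose_mul_factorial_mul_factorial hk]
          ring
  exact Nat.le_of_mul_le_mul_left final (Nat.factorial_pos l)

lemma two_pow_aux (m : ℕ) (hm : 2 ≤ m) : m + 2 ≤ 2 ^ m := by
  induction m with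
  | zero => omega
  | succ m ih =>
    rcases Nat.lt_or_ge m 2 with h | h
    · have : m = 1 := by omega
      subst this; norm_num
    · have h1 := ih h
      have h2 : 1 ≤ 2 ^ m := Nat.one_le_two_pow
      rw [pow_succ]
      omega

lemma three_mul_aux (l : ℕ) (hl : 5 ≤ l) : 3 * (l + 2) ≤ 2 ^ l := by
  induction l with
  | zero => omega
  | succ l ih =>
    rcases Nat.lt_or_ge l 5 with h | h
    · have : l = 4 := by omega
      subst this; norm_num
    · have := ih h
      rw [pow_succ]
      omega

lemma aux (l : ℕ) (hl : 5 ≤ l) : ∀ k, 1 ≤ k → k ≤ l - 1 →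
    3 * ((l + 2).descFactorial k * 2 ^ ((l - k).choose 2)) ≤ 2 ^ (l.choose 2) * 2 ^ k := by
  intro k
  induction k with
  | zero => omega
  | succ k ih =>
    intro _ hk
    rcases Nat.eq_zero_or_pos k with rfl | hkpos
    · -- base case k+1 = 1
      obtain ⟨m, rfl⟩ : ∃ m, l = m + 1 := ⟨l - 1, by omega⟩
      have hch : (m + 1).choose 2 = m + m.choose 2 := by
        rw [Nat.choose_succ_succ, Nat.choose_one_right]
      have h3 : 3 * (m + 1 + 2) ≤ 2 ^ (m + 1) := three_mul_aux (m + 1) hl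
      simp only [zero_add, Nat.descFactorial_one, hch, Nat.add_sub_cancel, pow_succ, pow_add, pow_one]
      calc 3 * ((m + 1 + 2) * 2 ^ m.choose 2) = (3 * (m + 1 + 2)) * 2 ^ m.choose 2 := by ring
        _ ≤ (2 ^ m * 2) * 2 ^ m.choose 2 := Nat.mul_le_mul_right _ (by rw [← pow_succ]; exact h3)
        _ = 2 ^ m * 2 ^ m.choose 2 * 2 := by ring
    · -- inductive step
      have hk' : k ≤ l - 1 := by omega
      have H := ih hkpos hk'
      obtain ⟨m, hm⟩ : ∃ m, l - k = m + 1 := ⟨l - k - 1, by omega⟩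
      have hm2 : l - (k + 1) = m := by omega
      have hkey : l + 2 - k ≤ 2 ^ (m + 1) := by
        have h2 : 2 ≤ m + 1 := by omega
        have := two_pow_aux (m + 1) h2
        omega
      have e1 : (l - k).choose 2 = m + m.choose 2 := by
        rw [hm, Nat.choose_succ_succ, Nat.choose_one_right]
      have hdF : (l + 2).descFactorial (k + 1) = (l + 2 - k) * (l + 2).descFactorial k :=
        Nat.descFactorial_succ _ _
      refine Nat.le_of_mul_le_mul_right ?_ (show 0 < 2 ^ m by positivity)
      calc 3 * ((l + 2).descFactorial (k + 1) * 2 ^ ((l - (k + 1)).choose 2)) * 2 ^ m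
          = (l + 2 - k) * (3 * ((l + 2).descFactorial k * (2 ^ (m.choose 2) * 2 ^ m))) := by
            rw [hdF, hm2]; ring
        _ = (l + 2 - k) * (3 * ((l + 2).descFactorial k * 2 ^ ((l - k).choose 2))) := by
            rw [e1, pow_add]; ring
        _ ≤ (l + 2 - k) * (2 ^ (l.choose 2) * 2 ^ k) := Nat.mul_le_mul_left _ H
        _ ≤ 2 ^ (m + 1) * (2 ^ (l.choose 2) * 2 ^ k) := Nat.mul_le_mul_right _ hkey
        _ = 2 ^ (l.choose 2) * 2 ^ (k + 1) * 2 ^ m := by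
            rw [pow_succ, pow_succ]; ring

lemma key (l : ℕ) (hl : 5 ≤ l) (k : ℕ) (h1 : 1 ≤ k) (hk : k ≤ l) :
    2 * ((l + 2).descFactorial k * 2 ^ ((l - k).choose 2)) ≤ 2 ^ (l.choose 2) * 2 ^ k := by
  rcases Nat.lt_or_ge k l with h | h
  · have H := aux l hl k h1 (by omega)
    set X := (l + 2).descFactorial k * 2 ^ ((l - k).choose 2) with hX
    omega
  · have hkl : k = l := le_antisymm hk h
    subst hkl
    obtain ⟨m, rfl⟩ : ∃ m, k = m + 1 := ⟨k - 1, by omega⟩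
    have H := aux (m + 1) hl m (by omega) (by omega)
    have hdF : (m + 1 + 2).descFactorial (m + 1) = 3 * (m + 1 + 2).descFactorial m := by
      rw [Nat.descFactorial_succ]
      congr 1
      omega
    have e0 : (m + 1 - (m + 1)).choose 2 = 0 := by norm_num
    have e1 : (m + 1 - m).choose 2 = 0 := by
      have : m + 1 - m = 1 := by omega
      rw [this]; rfl
    rw [e1] at H
    rw [e0, hdF, pow_succ]
    have hre : (2:ℕ) ^ ((m + 1).choose 2) * (2 ^ m * 2) = (2 ^ ((m + 1).choose 2) * 2 ^ m) * 2 := by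
      ring
    rw [hre]
    set Y := (m + 1 + 2).descFactorial m with hY
    set Z := (2:ℕ) ^ ((m + 1).choose 2) * 2 ^ m with hZ
    simp only [pow_zero, mul_one] at H ⊢
    omega


end Stmt9

theorem stmt_9 (n : ℕ) (hn : 2 ≤ n) (l : ℕ) (L : Fin n → ℕ)
    (hL : ∀ i, 0 < L i) (hsum : ∑ i, L i = l) (hl : 5 ≤ l)
    (a : ℕ → ℕ)
    (ha : ∀ k, a k = 2 ^ (Nat.choose (l - k) 2) *
      ∑ j ∈ (Finset.Nat.antidiagonalTuple n (l - k)).filter (fun j => ∀ i, j i ≤ L i),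
        Nat.multinomial Finset.univ j * ∏ i, Nat.choose (L i + 2) (j i + 2)) :
    (∑ k ∈ Finset.Icc 1 l, (2 : ℝ) ^ k * (a k : ℝ)) <
      (Real.exp 4 - 1) / 2 * 2 ^ (Nat.choose l 2) * (Nat.multinomial Finset.univ L : ℝ) := by
  classical
  set M := Nat.multinomial Finset.univ L with hM
  have hMpos : 0 < M := Nat.multinomial_pos _ _
  have hnat : ∀ k, 1 ≤ k → k ≤ l →
      2 * Nat.factorial k * (2 ^ k * a k) ≤ 4 ^ k * (2 ^ (l.choose 2) * M) := by
    intro k h1 hk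
    have hb : a k ≤ 2 ^ ((l - k).choose 2) * ((l + 2).choose k * M) := by
      rw [ha k]
      exact Nat.mul_le_mul le_rfl (Stmt9.main_bound L l k hsum hk)
    have hkey := Stmt9.key l hl k h1 hk
    calc 2 * k.factorial * (2 ^ k * a k)
        ≤ 2 * k.factorial * (2 ^ k * (2 ^ ((l - k).choose 2) * ((l + 2).choose k * M))) :=
          Nat.mul_le_mul le_rfl (Nat.mul_le_mul le_rfl hb)
      _ = (2 * ((l + 2).descFactorial k * 2 ^ ((l - k).choose 2))) * 2 ^ k * M := by
          rw [Nat.descFactorial_eq_factorial_mul_choose]; ring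
      _ ≤ (2 ^ (l.choose 2) * 2 ^ k) * 2 ^ k * M :=
          Nat.mul_le_mul (Nat.mul_le_mul hkey le_rfl) le_rfl
      _ = 4 ^ k * (2 ^ (l.choose 2) * M) := by
          have h4 : (4:ℕ) ^ k = 2 ^ k * 2 ^ k := by rw [← Nat.mul_pow]
          rw [h4]; ring
  have hreal : ∀ k ∈ Finset.Icc 1 l, (2:ℝ) ^ k * (a k : ℝ) ≤
      (4:ℝ) ^ k / Nat.factorial k * ((2:ℝ) ^ (l.choose 2) * (M:ℝ) / 2) := by
    intro k hkmem
    obtain ⟨h1, hk⟩ := Finset.mem_Icc.mp hkmem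
    have h := hnat k h1 hk
    have hcast : (2:ℝ) * (Nat.factorial k : ℝ) * ((2:ℝ) ^ k * (a k : ℝ))
        ≤ (4:ℝ) ^ k * ((2:ℝ) ^ (l.choose 2) * (M:ℝ)) := by exact_mod_cast h
    rw [div_mul_div_comm, le_div_iff₀ (by positivity)]
    calc (2:ℝ) ^ k * (a k : ℝ) * ((Nat.factorial k : ℝ) * 2)
        = (2:ℝ) * (Nat.factorial k : ℝ) * ((2:ℝ) ^ k * (a k : ℝ)) := by ring
      _ ≤ (4:ℝ) ^ k * ((2:ℝ) ^ (l.choose 2) * (M:ℝ)) := hcast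
  have hsum1 : (∑ k ∈ Finset.Icc 1 l, (2:ℝ) ^ k * (a k : ℝ))
      ≤ (∑ k ∈ Finset.Icc 1 l, (4:ℝ) ^ k / Nat.factorial k) *
        ((2:ℝ) ^ (l.choose 2) * (M:ℝ) / 2) := by
    rw [Finset.sum_mul]
    exact Finset.sum_le_sum hreal
  have hexp : (∑ k ∈ Finset.Icc 1 l, (4:ℝ) ^ k / Nat.factorial k) < Real.exp 4 - 1 := by
    have h0 : ∑ k ∈ Finset.range (l + 1), (4:ℝ) ^ k / Nat.factorial k
        = 1 + ∑ k ∈ Finset.Icc 1 l, (4:ℝ) ^ k / Nat.factorial k := by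
      have hins : Finset.range (l + 1) = insert 0 (Finset.Icc 1 l) := by
        ext x
        simp only [Finset.mem_range, Finset.mem_insert, Finset.mem_Icc]
        omega
      rw [hins, Finset.sum_insert (by simp)]
      norm_num
    have h2 := Real.sum_le_exp_of_nonneg (by norm_num : (0:ℝ) ≤ 4) (l + 2)
    rw [Finset.sum_range_succ] at h2
    have h3 : (0:ℝ) < 4 ^ (l + 1) / Nat.factorial (l + 1) := by positivity
    linarith
  have hXpos : (0:ℝ) < (2:ℝ) ^ (l.choose 2) * (M:ℝ) / 2 := by positivity
  calc (∑ k ∈ Finset.Icc 1 l, (2:ℝ) ^ k * (a k : ℝ))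
      ≤ (∑ k ∈ Finset.Icc 1 l, (4:ℝ) ^ k / Nat.factorial k) *
        ((2:ℝ) ^ (l.choose 2) * (M:ℝ) / 2) := hsum1
    _ < (Real.exp 4 - 1) * ((2:ℝ) ^ (l.choose 2) * (M:ℝ) / 2) :=
        mul_lt_mul_of_pos_right hexp hXpos
    _ = (Real.exp 4 - 1) / 2 * 2 ^ (Nat.choose l 2) * (M:ℝ) := by ring
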